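/- Bessel function product bound: Let N ≥ 0 be an integer and j the first positive zero of J_N. Then for every x ∈ (0, j], 0 ≤ J_N(x) ≤ (x^N/(2^N·N!))·(1 − x²/j²). -/

import Mathlib

open Real

/-- The Bessel function of the first kind of integer order `ν`, defined by its
everywhere-convergent power series. -/
noncomputable def besselJ (ν : ℕ) (x : ℝ) : ℝ :=
  ∑' k : ℕ, (-1 : ℝ) ^ k / ((k.factorial : ℝ) * ((k + ν).factorial : ℝ)) * (x / 2) ^ (ν + 2 * k)

noncomputable def besselC (N : ℕ) (k : ℕ) : ℝ :=
  (-1) ^ k / ((k.factorial : ℝ) * ((k + N).factorial : ℝ) * 2 ^ (N + 2 * k))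

noncomputable def dC (b : ℕ → ℝ) : ℕ → ℝ := fun k => ((k : ℝ) + 1) * b (k + 1)

noncomputable def shC (c : ℕ → ℝ) : ℕ → ℝ := fun k => match k with
  | 0 => 0
  | m + 1 => c m

noncomputable def pser (b : ℕ → ℝ) (t : ℝ) : ℝ := ∑' k, b k * t ^ k

def GoodC (b : ℕ → ℝ) : Prop := ∀ k, |b k| ≤ 1 / (k.factorial : ℝ)

lemma goodC_besselC (N : ℕ) : GoodC (besselC N) := by
  intro k
  have h1 : (0:ℝ) < (k.factorial : ℝ) := by positivity
  have h2 : (1:ℝ) ≤ ((k + N).factorial : ℝ) := by exact_mod_cast Nat.one_le_iff_ne_zero.2 (Nat.factorial_ne_zero _)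
  have h3 : (1:ℝ) ≤ (2:ℝ) ^ (N + 2 * k) := one_le_pow₀ (by norm_num)
  have habs : |besselC N k| = 1 / ((k.factorial : ℝ) * ((k + N).factorial : ℝ) * 2 ^ (N + 2 * k)) := by
    rw [besselC, abs_div, abs_pow, abs_neg, abs_one, one_pow]
    congr 1
    rw [abs_of_pos]
    positivity
  rw [habs]
  apply one_div_le_one_div_of_le h1
  nlinarith [mul_le_mul_of_nonneg_left (one_le_mul_of_one_le_of_one_le h2 h3) h1.le]

lemma goodC_dC {b : ℕ → ℝ} (hb : GoodC b) : GoodC (dC b) := by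
  intro k
  have h := hb (k + 1)
  have hk : (0:ℝ) < (k : ℝ) + 1 := by positivity
  have : |dC b k| = ((k:ℝ) + 1) * |b (k + 1)| := by
    rw [dC, abs_mul, abs_of_pos hk]
  rw [this]
  have hf : ((k + 1).factorial : ℝ) = ((k:ℝ) + 1) * (k.factorial : ℝ) := by
    push_cast [Nat.factorial_succ]; ring
  calc ((k:ℝ) + 1) * |b (k + 1)| ≤ ((k:ℝ) + 1) * (1 / ((k+1).factorial : ℝ)) := by
        exact mul_le_mul_of_nonneg_left h hk.le
    _ = 1 / (k.factorial : ℝ) := by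
        rw [hf]; field_simp

lemma summable_good {b : ℕ → ℝ} (hb : GoodC b) (t : ℝ) :
    Summable (fun k => b k * t ^ k) := by
  apply Summable.of_norm_bounded (g := fun k : ℕ => |t| ^ k / k.factorial)
    (Real.summable_pow_div_factorial |t|)
  intro k
  have h1 : (0:ℝ) < (k.factorial : ℝ) := by positivity
  rw [norm_mul, norm_pow, Real.norm_eq_abs, Real.norm_eq_abs]
  calc |b k| * |t| ^ k ≤ (1 / k.factorial) * |t| ^ k :=
        mul_le_mul_of_nonneg_right (hb k) (by positivity)
    _ = |t| ^ k / k.factorial := by ring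

lemma hasDerivAt_pser {b : ℕ → ℝ} (hb : GoodC b) (t : ℝ) :
    HasDerivAt (pser b) (pser (dC b) t) t := by
  set R : ℝ := |t| + 1 with hRdef
  have hR1 : (1:ℝ) ≤ R := by rw [hRdef]; nlinarith [abs_nonneg t]
  have hR0 : (0:ℝ) < R := by linarith
  have ht : t ∈ Metric.ball (0:ℝ) R := by
    simp [Real.dist_eq, hRdef]
  -- bound lemma
  have hbound : ∀ n : ℕ, ∀ y ∈ Metric.ball (0:ℝ) R,
      ‖b n * ((n:ℝ) * y ^ (n - 1))‖ ≤ (2 * R) ^ n / n.factorial := by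
    intro n y hy
    have hyR : |y| ≤ R := by
      have := Metric.mem_ball.1 hy
      rw [Real.dist_eq, sub_zero] at this
      exact this.le
    have hfac : (0:ℝ) < (n.factorial : ℝ) := by positivity
    have key : (n:ℝ) * |y| ^ (n - 1) ≤ 2 ^ n * R ^ n := by
      cases n with
      | zero => simp
      | succ m =>
        have h1 : |y| ^ m ≤ R ^ m := pow_le_pow_left₀ (abs_nonneg y) hyR m
        have h2 : ((m:ℝ) + 1) ≤ 2 ^ (m + 1) := by
          exact_mod_cast (Nat.lt_two_pow_self (n := m + 1)).le
        have h3 : R ^ m ≤ R ^ (m + 1) := pow_le_pow_right₀ hR1 (Nat.le_succ m)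
        have h4 : (0:ℝ) ≤ R ^ m := by positivity
        have h5 : (0:ℝ) < 2 ^ (m+1) := by positivity
        calc ((m+1 : ℕ):ℝ) * |y| ^ (m + 1 - 1) = ((m:ℝ)+1) * |y| ^ m := by push_cast; ring
          _ ≤ ((m:ℝ)+1) * R ^ m := by nlinarith
          _ ≤ 2 ^ (m+1) * R ^ (m+1) := by nlinarith
    have hb' := hb n
    rw [norm_mul, Real.norm_eq_abs, Real.norm_eq_abs, abs_mul, abs_pow, Nat.abs_cast, mul_pow]
    calc |b n| * ((n:ℝ) * |y| ^ (n-1)) ≤ (1 / n.factorial) * (2 ^ n * R ^ n) := by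
          apply mul_le_mul hb' key (by positivity) (by positivity)
      _ = 2 ^ n * R ^ n / n.factorial := by ring
  have hu : Summable (fun n : ℕ => (2 * R) ^ n / n.factorial) :=
    Real.summable_pow_div_factorial _
  have hder := hasDerivAt_tsum_of_isPreconnected hu Metric.isOpen_ball
    (convex_ball (0:ℝ) R).isPreconnected
    (g := fun n y => b n * y ^ n) (g' := fun n y => b n * ((n:ℝ) * y ^ (n - 1)))
    (fun n y _ => (hasDerivAt_pow n y).const_mul (b n))
    hbound (Metric.mem_ball_self hR0) (summable_good hb 0) ht
  have hsum' : Summable (fun n => b n * ((n:ℝ) * t ^ (n - 1))) :=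
    Summable.of_norm_bounded hu (fun n => hbound n t ht)
  have heq : (∑' n, b n * ((n:ℝ) * t ^ (n - 1))) = pser (dC b) t := by
    rw [Summable.tsum_eq_zero_add hsum']
    simp only [Nat.cast_zero, zero_mul, mul_zero, zero_add]
    apply tsum_congr
    intro k
    simp only [dC, Nat.add_sub_cancel]
    push_cast
    ring
  rw [← heq]
  exact hder

lemma summable_shC (c : ℕ → ℝ) (t : ℝ) (hc : Summable (fun k => c k * t ^ k)) :
    Summable (fun k => shC c k * t ^ k) := by
  have h1 : Summable (fun k => shC c (k + 1) * t ^ (k + 1)) := by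
    have h2 : Summable (fun k => (c k * t ^ k) * t) := hc.mul_right t
    apply h2.congr
    intro k
    show c k * t ^ k * t = shC c (k+1) * t ^ (k+1)
    simp only [shC, pow_succ]; ring
  exact (summable_nat_add_iff 1).mp h1

lemma pser_shC (c : ℕ → ℝ) (t : ℝ) (hc : Summable (fun k => c k * t ^ k)) :
    pser (shC c) t = t * pser c t := by
  rw [pser, Summable.tsum_eq_zero_add (summable_shC c t hc)]
  simp only [shC, pow_zero, zero_mul, zero_add]
  have : (fun k : ℕ => c k * t ^ (k + 1)) = fun k => (c k * t ^ k) * t := by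
    funext k; rw [pow_succ]; ring
  rw [this, tsum_mul_right]
  rw [pser]; ring

lemma ode_gen (M : ℝ) (e : ℕ → ℝ) (he : GoodC e)
    (hrec : ∀ k : ℕ, ((k:ℝ) + 1) * ((k:ℝ) + M + 1) * e (k + 1) = -(e k) / 4) (t : ℝ) :
    t * pser (dC (dC e)) t + (M + 1) * pser (dC e) t + pser e t / 4 = 0 := by
  have h2 : GoodC (dC e) := goodC_dC he
  have h3 : GoodC (dC (dC e)) := goodC_dC h2
  have s1 : Summable (fun k => shC (dC (dC e)) k * t ^ k) :=
    summable_shC _ t (summable_good h3 t)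
  have s2 : Summable (fun k => (M + 1) * (dC e k * t ^ k)) :=
    (summable_good h2 t).mul_left _
  have s3 : Summable (fun k => (e k * t ^ k) / 4) := (summable_good he t).div_const _
  have key : ∀ k : ℕ, shC (dC (dC e)) k * t ^ k +
      ((M + 1) * (dC e k * t ^ k) + (e k * t ^ k) / 4) = 0 := by
    intro k
    cases k with
    | zero =>
      simp only [shC, dC, pow_zero, mul_one, zero_add, Nat.cast_zero]
      have h := hrec 0
      push_cast at h
      linarith [h]
    | succ m =>
      show dC (dC e) m * t ^ (m+1) + ((M + 1) * (dC e (m+1) * t ^ (m+1)) + (e (m+1) * t ^ (m+1)) / 4) = 0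
      have h := hrec (m + 1)
      simp only [dC]
      push_cast at h ⊢
      linear_combination t ^ (m + 1) * h
  calc t * pser (dC (dC e)) t + (M + 1) * pser (dC e) t + pser e t / 4
      = pser (shC (dC (dC e))) t + ((M + 1) * pser (dC e) t + pser e t / 4) := by
        rw [pser_shC _ t (summable_good h3 t)]; ring
    _ = ∑' k, (shC (dC (dC e)) k * t ^ k +
          ((M + 1) * (dC e k * t ^ k) + (e k * t ^ k) / 4)) := by
        rw [Summable.tsum_add s1 (s2.add s3), Summable.tsum_add s2 s3, pser, pser, pser,
          tsum_mul_left, tsum_div_const]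
    _ = ∑' (_ : ℕ), (0:ℝ) := tsum_congr key
    _ = 0 := tsum_zero

lemma pser_zero (b : ℕ → ℝ) : pser b 0 = b 0 := by
  rw [pser, tsum_eq_single 0]
  · simp
  · intro n hn; simp [zero_pow hn]

lemma besselC_rec (N : ℕ) : ∀ k : ℕ,
    ((k:ℝ) + 1) * ((k:ℝ) + (N:ℝ) + 1) * besselC N (k + 1) = -(besselC N k) / 4 := by
  intro k
  have e1 : (((k+1).factorial : ℕ) : ℝ) = ((k:ℝ) + 1) * (k.factorial : ℝ) := by
    push_cast [Nat.factorial_succ]; ring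
  have e2 : (((k+1+N).factorial : ℕ) : ℝ) = ((k:ℝ) + (N:ℝ) + 1) * ((k+N).factorial : ℝ) := by
    have h : k + 1 + N = (k + N) + 1 := by ring
    rw [h, Nat.factorial_succ]; push_cast; ring
  have e3 : (2:ℝ) ^ (N + 2 * (k+1)) = 2 ^ (N + 2*k) * 4 := by
    have h : N + 2 * (k+1) = (N + 2*k) + 2 := by ring
    rw [h, pow_add]; norm_num
  have h1 : ((k.factorial : ℕ) : ℝ) ≠ 0 := by positivity
  have h2 : (((k+N).factorial : ℕ) : ℝ) ≠ 0 := by positivity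
  have h3 : (2:ℝ) ^ (N + 2*k) ≠ 0 := by positivity
  have h4 : ((k:ℝ) + 1) ≠ 0 := by positivity
  have h5 : ((k:ℝ) + (N:ℝ) + 1) ≠ 0 := by positivity
  rw [besselC, besselC, e1, e2, e3, pow_succ]
  field_simp

lemma rec_dC (M : ℝ) (e : ℕ → ℝ)
    (hrec : ∀ k : ℕ, ((k:ℝ) + 1) * ((k:ℝ) + M + 1) * e (k + 1) = -(e k) / 4) :
    ∀ k : ℕ, ((k:ℝ) + 1) * ((k:ℝ) + (M + 1) + 1) * dC e (k + 1) = -(dC e k) / 4 := by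
  intro k
  have h := hrec (k + 1)
  simp only [dC]
  push_cast at h ⊢
  linear_combination ((k:ℝ) + 1) * h

lemma besselJ_eq (N : ℕ) (x : ℝ) : besselJ N x = x ^ N * pser (besselC N) (x ^ 2) := by
  rw [pser, ← tsum_mul_left]
  apply tsum_congr
  intro k
  rw [besselC, div_pow]
  have h1 : (x / 2) ^ (N + 2 * k) = x ^ (N + 2*k) / 2 ^ (N + 2*k) := div_pow x 2 _
  have h2 : x ^ (N + 2*k) = x ^ N * (x ^ 2) ^ k := by
    rw [pow_add, pow_mul]
  rw [h2]
  have h3 : ((k.factorial : ℕ) : ℝ) ≠ 0 := by positivity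
  have h4 : (((k+N).factorial : ℕ) : ℝ) ≠ 0 := by positivity
  have h5 : (2:ℝ) ^ (N + 2*k) ≠ 0 := by positivity
  field_simp

/-- Bessel function product bound: for `x ∈ (0, j]`, where `j` is the first positive
zero of `J_N`, one has `0 ≤ J_N(x) ≤ (x^N/(2^N·N!))·(1 − x²/j²)`. -/
theorem besselJ_product_bound (N : ℕ) (j : ℝ) (hj : 0 < j) (hjz : besselJ N j = 0)
    (hj_first : ∀ t : ℝ, 0 < t → t < j → besselJ N t ≠ 0)
    (x : ℝ) (hx : 0 < x) (hxj : x ≤ j) :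
    0 ≤ besselJ N x ∧
      besselJ N x ≤ x ^ N / (2 ^ N * (N.factorial : ℝ)) * (1 - x ^ 2 / j ^ 2) := by
  set b : ℕ → ℝ := besselC N with hbdef
  have hb : GoodC b := goodC_besselC N
  have hb1 : GoodC (dC b) := goodC_dC hb
  have hb2 : GoodC (dC (dC b)) := goodC_dC hb1
  have hb3 : GoodC (dC (dC (dC b))) := goodC_dC hb2
  set ψ : ℝ → ℝ := pser b with hψdef
  set ψ1 : ℝ → ℝ := pser (dC b) with hψ1def
  set ψ2 : ℝ → ℝ := pser (dC (dC b)) with hψ2def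
  set ψ3 : ℝ → ℝ := pser (dC (dC (dC b))) with hψ3def
  have hD : ∀ t, HasDerivAt ψ (ψ1 t) t := hasDerivAt_pser hb
  have hD1 : ∀ t, HasDerivAt ψ1 (ψ2 t) t := hasDerivAt_pser hb1
  have hD2 : ∀ t, HasDerivAt ψ2 (ψ3 t) t := hasDerivAt_pser hb2
  have hcont : Continuous ψ := Differentiable.continuous (fun t => (hD t).differentiableAt)
  have hcont2 : Continuous ψ2 :=
    Differentiable.continuous (fun t => (hD2 t).differentiableAt)
  have ode1 : ∀ t, t * ψ2 t + ((N:ℝ) + 1) * ψ1 t + ψ t / 4 = 0 :=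
    fun t => ode_gen (N:ℝ) b hb (besselC_rec N) t
  have ode2 : ∀ t, t * ψ3 t + ((N:ℝ) + 2) * ψ2 t + ψ1 t / 4 = 0 := by
    intro t
    have h := ode_gen ((N:ℝ) + 1) (dC b) hb1 (rec_dC (N:ℝ) b (besselC_rec N)) t
    calc t * ψ3 t + ((N:ℝ) + 2) * ψ2 t + ψ1 t / 4
        = t * pser (dC (dC (dC b))) t + (((N:ℝ) + 1) + 1) * pser (dC (dC b)) t
          + pser (dC b) t / 4 := by ring
      _ = 0 := h
  have hb0pos : (0:ℝ) < b 0 := by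
    rw [hbdef, besselC]
    simp only [pow_zero]
    positivity
  have hψ0 : ψ 0 = b 0 := pser_zero b
  have hj2 : (0:ℝ) < j ^ 2 := by positivity
  have hψj2 : ψ (j ^ 2) = 0 := by
    have h := hjz
    rw [besselJ_eq N j] at h
    have hjN : j ^ N ≠ 0 := pow_ne_zero N hj.ne'
    exact (mul_eq_zero.1 h).resolve_left hjN
  -- ψ is nonzero on (0, j^2)
  have hne : ∀ t, 0 < t → t < j ^ 2 → ψ t ≠ 0 := by
    intro t ht htj h0
    have hx0 : 0 < Real.sqrt t := Real.sqrt_pos.2 ht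
    have hxj' : Real.sqrt t < j := (Real.sqrt_lt' hj).2 htj
    have hJ := hj_first (Real.sqrt t) hx0 hxj'
    apply hJ
    rw [besselJ_eq, Real.sq_sqrt ht.le, ← hψdef, h0, mul_zero]
  -- ψ is positive on [0, j^2)
  have hpos : ∀ t, 0 ≤ t → t < j ^ 2 → 0 < ψ t := by
    intro t ht htj
    rcases eq_or_lt_of_le ht with h | h
    · rw [← h, hψ0]; exact hb0pos
    · by_contra hnot
      push_neg at hnot
      have hlt : ψ t < 0 := lt_of_le_of_ne hnot (hne t h htj)
      have hsub := intermediate_value_Icc' h.le hcont.continuousOn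
      have h0mem : (0:ℝ) ∈ Set.Icc (ψ t) (ψ 0) := by
        constructor
        · exact hlt.le
        · rw [hψ0]; exact hb0pos.le
      obtain ⟨s, hs, hs0⟩ := hsub h0mem
      have hs0' : s ≠ 0 := by
        intro h'
        rw [h', hψ0] at hs0
        exact hb0pos.ne' hs0
      have hspos : 0 < s := lt_of_le_of_ne hs.1 (Ne.symm hs0')
      exact hne s hspos (lt_of_le_of_lt hs.2 htj) hs0
  -- ψ2 is positive at 0
  have hψ2at0 : 0 < ψ2 0 := by
    rw [hψ2def, pser_zero]
    have hbb : (0:ℝ) < b 2 := by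
      rw [hbdef, besselC]
      have : ((-1:ℝ)) ^ 2 = 1 := by norm_num
      rw [this]
      positivity
    simp only [dC, Nat.cast_zero, Nat.cast_one]
    nlinarith
  -- ψ2 is positive on (0, j^2)
  have hψ2pos : ∀ s, 0 < s → s < j ^ 2 → 0 < ψ2 s := by
    by_contra hnot
    push_neg at hnot
    obtain ⟨s, hs0, hsj, hs2⟩ := hnot
    set Z : Set ℝ := Set.Icc 0 s ∩ {r | ψ2 r ≤ 0} with hZdef
    have hZc : IsClosed Z := isClosed_Icc.inter (isClosed_le hcont2 continuous_const)
    have hZne : s ∈ Z := ⟨⟨hs0.le, le_refl s⟩, hs2⟩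
    have hbdd : BddBelow Z := ⟨0, fun r hr => hr.1.1⟩
    set t0 : ℝ := sInf Z with ht0def
    have ht0 : t0 ∈ Z := hZc.csInf_mem ⟨s, hZne⟩ hbdd
    have hlow : ∀ r, 0 ≤ r → r < t0 → 0 < ψ2 r := by
      intro r hr hrt0
      by_contra hr2
      push_neg at hr2
      have : r ∈ Z := ⟨⟨hr, hrt0.le.trans ht0.1.2⟩, hr2⟩
      exact absurd (csInf_le hbdd this) (not_le.2 hrt0)
    have ht0pos : 0 < t0 := by
      rcases eq_or_lt_of_le ht0.1.1 with h | h
      · exfalso; rw [← h] at ht0; exact absurd ht0.2 (not_le.2 hψ2at0)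
      · exact h
    have hψ2t0 : ψ2 t0 = 0 := by
      by_contra h
      have hlt : ψ2 t0 < 0 := lt_of_le_of_ne ht0.2 h
      have hsub := intermediate_value_Icc' ht0.1.1 hcont2.continuousOn
      have h0mem : (0:ℝ) ∈ Set.Icc (ψ2 t0) (ψ2 0) := ⟨hlt.le, hψ2at0.le⟩
      obtain ⟨s', hs', hs'0⟩ := hsub h0mem
      have hs't0 : s' ≠ t0 := by
        intro h'
        rw [h'] at hs'0
        exact hlt.ne hs'0
      have : s' < t0 := lt_of_le_of_ne hs'.2 hs't0
      exact absurd hs'0 (hlow s' hs'.1 this).ne'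
    have hψt0 : 0 < ψ t0 := hpos t0 ht0.1.1 (lt_of_le_of_lt ht0.1.2 hsj)
    have hψ1t0 : ψ1 t0 < 0 := by
      have h := ode1 t0
      rw [hψ2t0, mul_zero, zero_add] at h
      have hN : (0:ℝ) < (N:ℝ) + 1 := by positivity
      nlinarith
    have hψ3t0 : 0 < ψ3 t0 := by
      have h := ode2 t0
      rw [hψ2t0, mul_zero, add_zero] at h
      nlinarith
    -- slope contradiction
    have hd := hD2 t0
    rw [hasDerivAt_iff_tendsto_slope] at hd
    have hev : ∀ᶠ z in nhdsWithin t0 {t0}ᶜ, 0 < slope ψ2 t0 z :=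
      hd.eventually (eventually_gt_nhds hψ3t0)
    have hmono : nhdsWithin t0 (Set.Iio t0) ≤ nhdsWithin t0 {t0}ᶜ :=
      nhdsWithin_mono _ (fun z hz => ne_of_lt hz)
    have hev2 : ∀ᶠ z in nhdsWithin t0 (Set.Iio t0), 0 < slope ψ2 t0 z := hev.filter_mono hmono
    have hIoo : Set.Ioo 0 t0 ∈ nhdsWithin t0 (Set.Iio t0) :=
      Ioo_mem_nhdsLT_of_mem ⟨ht0pos, le_refl t0⟩
    obtain ⟨z, hz1, (hz2 : z ∈ Set.Ioo 0 t0)⟩ := (hev2.and (Filter.eventually_of_mem hIoo (fun z hz => hz))).exists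
    rw [slope_def_field] at hz1
    have hzt : z - t0 < 0 := sub_neg.2 hz2.2
    have hnum : ψ2 z - ψ2 t0 < 0 := by
      by_contra hge
      push_neg at hge
      have : (ψ2 z - ψ2 t0) / (z - t0) ≤ 0 := div_nonpos_of_nonneg_of_nonpos hge hzt.le
      linarith
    rw [hψ2t0, sub_zero] at hnum
    exact absurd hnum (hlow z hz2.1.le hz2.2).asymm
  -- convexity of ψ on [0, j^2]
  have hd1 : deriv ψ = ψ1 := funext fun t => (hD t).deriv
  have hd2 : deriv ψ1 = ψ2 := funext fun t => (hD1 t).deriv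
  have hconv : ConvexOn ℝ (Set.Icc 0 (j ^ 2)) ψ := by
    apply convexOn_of_deriv2_nonneg (convex_Icc _ _) hcont.continuousOn
    · exact Differentiable.differentiableOn (fun t => (hD t).differentiableAt)
    · rw [hd1]
      exact Differentiable.differentiableOn (fun t => (hD1 t).differentiableAt)
    · intro y hy
      rw [interior_Icc] at hy
      have he : deriv^[2] ψ y = ψ2 y := by
        rw [Function.iterate_succ_apply', Function.iterate_one, hd1, hd2]
      rw [he]
      exact (hψ2pos y hy.1 hy.2).le
  -- chord bound
  have hchord : ∀ t, 0 ≤ t → t ≤ j ^ 2 → ψ t ≤ b 0 * (1 - t / j ^ 2) := by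
    intro t ht htj
    have hla : (0:ℝ) ≤ 1 - t / j ^ 2 := by
      rw [sub_nonneg, div_le_one hj2]; exact htj
    have hlb : (0:ℝ) ≤ t / j ^ 2 := div_nonneg ht hj2.le
    have hsum : (1 - t / j ^ 2) + t / j ^ 2 = 1 := by ring
    have h := hconv.2 (Set.left_mem_Icc.2 hj2.le) (Set.right_mem_Icc.2 hj2.le) hla hlb hsum
    simp only [smul_eq_mul, mul_zero, zero_add] at h
    rw [div_mul_cancel₀ t hj2.ne'] at h
    rw [hψ0, hψj2, mul_zero, add_zero] at h
    calc ψ t ≤ (1 - t / j ^ 2) * b 0 := h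
      _ = b 0 * (1 - t / j ^ 2) := by ring
  -- final assembly
  have htx : 0 < x ^ 2 := by positivity
  have htxj : x ^ 2 ≤ j ^ 2 := by nlinarith
  have hψx : 0 ≤ ψ (x ^ 2) := by
    rcases lt_or_eq_of_le htxj with h | h
    · exact (hpos _ htx.le h).le
    · rw [h, hψj2]
  constructor
  · rw [besselJ_eq]
    exact mul_nonneg (pow_nonneg hx.le N) hψx
  · rw [besselJ_eq]
    have hchx := hchord (x ^ 2) htx.le htxj
    have hb0 : b 0 = 1 / (2 ^ N * (N.factorial : ℝ)) := by
      rw [hbdef, besselC]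
      simp [Nat.factorial_zero]
      ring
    calc x ^ N * ψ (x ^ 2) ≤ x ^ N * (b 0 * (1 - x ^ 2 / j ^ 2)) :=
          mul_le_mul_of_nonneg_left hchx (pow_nonneg hx.le N)
      _ = x ^ N / (2 ^ N * (N.factorial : ℝ)) * (1 - x ^ 2 / j ^ 2) := by
          rw [hb0]; ring
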